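/- Conservation of symmetric information under n-fold polarization: for any binary-input channel W with finite output alphabet and any n ≥ 0, Σ_{s∈{+,−}ⁿ} I(W^s) = 2ⁿ · I(W). -/

import Mathlib

open Finset Real

noncomputable section

/-- Binary symmetric channel with crossover probability `α`: `BSC α x y = W(y|x)`. -/
def BSC (α : ℝ) : Bool → Bool → ℝ := fun x y => if y = x then 1 - α else α

/-- Arıkan's minus polar transform. -/
def Wminus {Y : Type*} (W : Bool → Y → ℝ) : Bool → Y × Y → ℝ :=
  fun u₁ y => ∑ u₂ : Bool, (1/2) * W (u₁ ^^ u₂) y.1 * W u₂ y.2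

/-- Arıkan's plus polar transform; output `(y₁, y₂, u₁)`. -/
def Wplus {Y : Type*} (W : Bool → Y → ℝ) : Bool → Y × Y × Bool → ℝ :=
  fun u₂ y => (1/2) * W (y.2.2 ^^ u₂) y.1 * W u₂ y.2.1

/-- Mismatched information functional `I(W, V)`. -/
def Ifun {Y : Type*} [Fintype Y] (W V : Bool → Y → ℝ) : ℝ :=
  ∑ y : Y, ∑ x : Bool, (1/2) * W x y *
    Real.logb 2 (V x y / ((1/2) * V false y + (1/2) * V true y))

/-- Output alphabet after applying a sequence of polar transforms
(`true` = plus, `false` = minus, head applied first). -/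
def polarType (Y : Type u) : List Bool → Type u
  | [] => Y
  | true :: s => polarType (Y × Y × Bool) s
  | false :: s => polarType (Y × Y) s

/-- The synthesized channel `W^s`. -/
def polarChan {Y : Type*} (W : Bool → Y → ℝ) : (s : List Bool) → Bool → polarType Y s → ℝ
  | [] => W
  | true :: s => polarChan (Wplus W) s
  | false :: s => polarChan (Wminus W) s

instance polarFintype (Y : Type*) [Fintype Y] : ∀ s : List Bool, Fintype (polarType Y s)
  | [] => inferInstanceAs (Fintype Y)
  | true :: s => polarFintype (Y × Y × Bool) s
  | false :: s => polarFintype (Y × Y) s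

/-! ### Auxiliary lemmas -/

section Aux

variable {Y : Type*}


lemma Wminus_nonneg (W : Bool → Y → ℝ) (h0 : ∀ x y, 0 ≤ W x y) :
    ∀ x y, 0 ≤ Wminus W x y := by
  intro x y
  apply Finset.sum_nonneg
  intro u2 _
  have := h0 (x ^^ u2) y.1
  have := h0 u2 y.2
  positivity

lemma Wplus_nonneg (W : Bool → Y → ℝ) (h0 : ∀ x y, 0 ≤ W x y) :
    ∀ x y, 0 ≤ Wplus W x y := by
  intro x y
  have := h0 (y.2.2 ^^ x) y.1
  have := h0 x y.2.1
  unfold Wplus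
  positivity

lemma Dminus_eq (W : Bool → Y → ℝ) (y1 y2 : Y) :
    (1/2) * Wminus W false (y1, y2) + (1/2) * Wminus W true (y1, y2)
      = ((1/2) * W false y1 + (1/2) * W true y1) * ((1/2) * W false y2 + (1/2) * W true y2) := by
  simp only [Wminus, Fintype.sum_bool]
  ring_nf
  simp [Bool.xor_false, Bool.xor_true]
  ring

lemma Dplus_eq (W : Bool → Y → ℝ) (y1 y2 : Y) (u1 : Bool) :
    (1/2) * Wplus W false (y1, y2, u1) + (1/2) * Wplus W true (y1, y2, u1)
      = (1/2) * Wminus W u1 (y1, y2) := by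
  simp only [Wminus, Wplus, Fintype.sum_bool]
  ring

lemma term_eq (W : Bool → Y → ℝ) (h0 : ∀ x y, 0 ≤ W x y)
    (y1 y2 : Y) (u1 u2 : Bool) :
    (1/2) * ((1/2) * W (u1 ^^ u2) y1 * W u2 y2) *
      (Real.logb 2 (Wminus W u1 (y1, y2) /
          ((1/2) * Wminus W false (y1, y2) + (1/2) * Wminus W true (y1, y2))) +
       Real.logb 2 (Wplus W u2 (y1, y2, u1) /
          ((1/2) * Wplus W false (y1, y2, u1) + (1/2) * Wplus W true (y1, y2, u1))))
    = (1/2) * ((1/2) * W (u1 ^^ u2) y1 * W u2 y2) *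
      (Real.logb 2 (W (u1 ^^ u2) y1 / ((1/2) * W false y1 + (1/2) * W true y1)) +
       Real.logb 2 (W u2 y2 / ((1/2) * W false y2 + (1/2) * W true y2))) := by
  rcases eq_or_lt_of_le (h0 (u1 ^^ u2) y1) with ha | ha
  · rw [← ha]; ring
  rcases eq_or_lt_of_le (h0 u2 y2) with hb | hb
  · rw [← hb]; ring
  have hq1 : 0 < (1/2) * W false y1 + (1/2) * W true y1 := by
    have h0f := h0 false y1; have h0t := h0 true y1
    cases hxy : (u1 ^^ u2) <;> rw [hxy] at ha <;> linarith
  have hq2 : 0 < (1/2) * W false y2 + (1/2) * W true y2 := by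
    have h0f := h0 false y2; have h0t := h0 true y2
    cases u2 <;> linarith
  have hm : 0 < Wminus W u1 (y1, y2) := by
    have key : (1/2) * W (u1 ^^ u2) y1 * W u2 y2 ≤ Wminus W u1 (y1, y2) :=
      Finset.single_le_sum (f := fun v => (1/2) * W (Bool.xor u1 v) y1 * W v y2)
        (fun i _ => by have := h0 (Bool.xor u1 i) y1; have := h0 i y2; positivity)
        (Finset.mem_univ u2)
    exact lt_of_lt_of_le (mul_pos (mul_pos (by norm_num) ha) hb) key
  have hp : Wplus W u2 (y1, y2, u1) = (1/2) * W (u1 ^^ u2) y1 * W u2 y2 := rfl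
  rw [Dminus_eq, Dplus_eq, hp]
  congr 1
  have hab : 0 < (1/2) * W (u1 ^^ u2) y1 * W u2 y2 := by positivity
  rw [Real.logb_div (ne_of_gt hm) (ne_of_gt (mul_pos hq1 hq2)),
      Real.logb_mul (ne_of_gt hq1) (ne_of_gt hq2),
      Real.logb_div (ne_of_gt hab) (by positivity : (1/2 : ℝ) * Wminus W u1 (y1,y2) ≠ 0),
      Real.logb_mul (by positivity : (1/2 : ℝ) * W (u1 ^^ u2) y1 ≠ 0) (ne_of_gt hb),
      Real.logb_mul (by norm_num : (1/2 : ℝ) ≠ 0) (ne_of_gt ha),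
      Real.logb_mul (by norm_num : (1/2 : ℝ) ≠ 0) (ne_of_gt hm),
      Real.logb_div (ne_of_gt ha) (ne_of_gt hq1),
      Real.logb_div (ne_of_gt hb) (ne_of_gt hq2)]
  ring

end Aux

section AuxFin

variable {Y : Type*} [Fintype Y]

lemma sum_sum_mul (A B : Y → ℝ) (c : ℝ) (hA : ∑ y, A y = 1) (hB : ∑ y, B y = 1) :
    ∑ y1 : Y, ∑ y2 : Y, c * A y1 * B y2 = c := by
  have h : ∀ y1, ∑ y2 : Y, c * A y1 * B y2 = c * A y1 := by
    intro y1; rw [← Finset.mul_sum, hB, mul_one]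
  rw [Finset.sum_congr rfl fun y1 _ => h y1, ← Finset.mul_sum, hA, mul_one]

lemma Wminus_rowsum (W : Bool → Y → ℝ) (h1 : ∀ x, ∑ y, W x y = 1) :
    ∀ x, ∑ y : Y × Y, Wminus W x y = 1 := by
  intro x
  rw [Fintype.sum_prod_type]
  simp only [Wminus, Fintype.sum_bool]
  rw [Finset.sum_congr rfl fun y1 _ => Finset.sum_add_distrib,
      Finset.sum_add_distrib,
      sum_sum_mul (W (x ^^ true)) (W true) (1/2) (h1 _) (h1 _),
      sum_sum_mul (W (x ^^ false)) (W false) (1/2) (h1 _) (h1 _)]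
  norm_num

lemma Wplus_rowsum (W : Bool → Y → ℝ) (h1 : ∀ x, ∑ y, W x y = 1) :
    ∀ x, ∑ y : Y × Y × Bool, Wplus W x y = 1 := by
  intro x
  rw [Fintype.sum_prod_type]
  simp only [Fintype.sum_prod_type, Fintype.sum_bool, Wplus]
  rw [Finset.sum_congr rfl fun y1 _ => Finset.sum_add_distrib,
      Finset.sum_add_distrib,
      sum_sum_mul (W (true ^^ x)) (W x) (1/2) (h1 _) (h1 _),
      sum_sum_mul (W (false ^^ x)) (W x) (1/2) (h1 _) (h1 _)]
  norm_num

lemma hminus_eq (W : Bool → Y → ℝ) :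
    Ifun (Wminus W) (Wminus W)
      = ∑ y1 : Y, ∑ y2 : Y, ∑ u1 : Bool, ∑ u2 : Bool,
          (1/2) * ((1/2) * W (u1 ^^ u2) y1 * W u2 y2) *
            Real.logb 2 (Wminus W u1 (y1, y2) /
              ((1/2) * Wminus W false (y1, y2) + (1/2) * Wminus W true (y1, y2))) := by
  rw [Ifun, Fintype.sum_prod_type]
  refine Finset.sum_congr rfl fun y1 _ => Finset.sum_congr rfl fun y2 _ =>
    Finset.sum_congr rfl fun u1 _ => ?_
  have : (1/2 : ℝ) * Wminus W u1 (y1, y2)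
      = ∑ u2 : Bool, (1/2) * ((1/2) * W (u1 ^^ u2) y1 * W u2 y2) := by
    rw [Wminus, Finset.mul_sum]
  rw [this, Finset.sum_mul]

lemma hplus_eq (W : Bool → Y → ℝ) :
    Ifun (Wplus W) (Wplus W)
      = ∑ y1 : Y, ∑ y2 : Y, ∑ u1 : Bool, ∑ u2 : Bool,
          (1/2) * ((1/2) * W (u1 ^^ u2) y1 * W u2 y2) *
            Real.logb 2 (Wplus W u2 (y1, y2, u1) /
              ((1/2) * Wplus W false (y1, y2, u1) + (1/2) * Wplus W true (y1, y2, u1))) := by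
  rw [Ifun, Fintype.sum_prod_type]
  refine Finset.sum_congr rfl fun y1 _ => ?_
  rw [Fintype.sum_prod_type]
  refine Finset.sum_congr rfl fun y2 _ => Finset.sum_congr rfl fun u1 _ =>
    Finset.sum_congr rfl fun u2 _ => ?_
  have : (1/2 : ℝ) * Wplus W u2 (y1, y2, u1)
      = (1/2) * ((1/2) * W (u1 ^^ u2) y1 * W u2 y2) := by
    rw [Wplus]
  rw [this]

lemma claimA (W : Bool → Y → ℝ) (h1 : ∀ x, ∑ y, W x y = 1) :
    ∑ y1 : Y, ∑ y2 : Y, ∑ u1 : Bool, ∑ u2 : Bool,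
        (1/2) * ((1/2) * W (u1 ^^ u2) y1 * W u2 y2) *
          Real.logb 2 (W (u1 ^^ u2) y1 / ((1/2) * W false y1 + (1/2) * W true y1))
      = Ifun W W := by
  have inner : ∀ y1 y2 : Y, ∑ u1 : Bool, ∑ u2 : Bool,
      (1/2) * ((1/2) * W (u1 ^^ u2) y1 * W u2 y2) *
        Real.logb 2 (W (u1 ^^ u2) y1 / ((1/2) * W false y1 + (1/2) * W true y1))
      = (∑ a : Bool, (1/2) * W a y1 *
          Real.logb 2 (W a y1 / ((1/2) * W false y1 + (1/2) * W true y1)))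
        * (∑ u2 : Bool, (1/2) * W u2 y2) := by
    intro y1 y2
    simp [Fintype.sum_bool]
    ring
  calc ∑ y1 : Y, ∑ y2 : Y, ∑ u1 : Bool, ∑ u2 : Bool,
        (1/2) * ((1/2) * W (u1 ^^ u2) y1 * W u2 y2) *
          Real.logb 2 (W (u1 ^^ u2) y1 / ((1/2) * W false y1 + (1/2) * W true y1))
      = (∑ y1 : Y, ∑ a : Bool, (1/2) * W a y1 *
          Real.logb 2 (W a y1 / ((1/2) * W false y1 + (1/2) * W true y1)))
        * (∑ y2 : Y, ∑ u2 : Bool, (1/2) * W u2 y2) := by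
        rw [Finset.sum_mul]
        refine Finset.sum_congr rfl fun y1 _ => ?_
        rw [Finset.mul_sum]
        exact Finset.sum_congr rfl fun y2 _ => inner y1 y2
    _ = Ifun W W := by
        have hone : ∑ y2 : Y, ∑ u2 : Bool, (1/2 : ℝ) * W u2 y2 = 1 := by
          rw [Finset.sum_comm]
          simp only [Fintype.sum_bool, ← Finset.mul_sum, h1 true, h1 false]
          norm_num
        rw [hone, mul_one, Ifun]

lemma claimB (W : Bool → Y → ℝ) (h1 : ∀ x, ∑ y, W x y = 1) :
    ∑ y1 : Y, ∑ y2 : Y, ∑ u1 : Bool, ∑ u2 : Bool,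
        (1/2) * ((1/2) * W (u1 ^^ u2) y1 * W u2 y2) *
          Real.logb 2 (W u2 y2 / ((1/2) * W false y2 + (1/2) * W true y2))
      = Ifun W W := by
  have inner : ∀ y1 y2 : Y, ∑ u1 : Bool, ∑ u2 : Bool,
      (1/2) * ((1/2) * W (u1 ^^ u2) y1 * W u2 y2) *
        Real.logb 2 (W u2 y2 / ((1/2) * W false y2 + (1/2) * W true y2))
      = (∑ a : Bool, (1/4) * W a y1)
        * (∑ u2 : Bool, W u2 y2 *
            Real.logb 2 (W u2 y2 / ((1/2) * W false y2 + (1/2) * W true y2))) := by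
    intro y1 y2
    simp [Fintype.sum_bool]
    ring
  calc ∑ y1 : Y, ∑ y2 : Y, ∑ u1 : Bool, ∑ u2 : Bool,
        (1/2) * ((1/2) * W (u1 ^^ u2) y1 * W u2 y2) *
          Real.logb 2 (W u2 y2 / ((1/2) * W false y2 + (1/2) * W true y2))
      = (∑ y1 : Y, ∑ a : Bool, (1/4 : ℝ) * W a y1)
        * (∑ y2 : Y, ∑ u2 : Bool, W u2 y2 *
            Real.logb 2 (W u2 y2 / ((1/2) * W false y2 + (1/2) * W true y2))) := by
        rw [Finset.sum_mul]
        refine Finset.sum_congr rfl fun y1 _ => ?_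
        rw [Finset.mul_sum]
        exact Finset.sum_congr rfl fun y2 _ => inner y1 y2
    _ = Ifun W W := by
        have hhalf : ∑ y1 : Y, ∑ a : Bool, (1/4 : ℝ) * W a y1 = 1/2 := by
          rw [Finset.sum_comm]
          simp only [Fintype.sum_bool, ← Finset.mul_sum, h1 true, h1 false]
          norm_num
        rw [hhalf, Ifun, Finset.mul_sum]
        refine Finset.sum_congr rfl fun y _ => ?_
        rw [Finset.mul_sum]
        exact Finset.sum_congr rfl fun x _ => by ring

lemma one_step (W : Bool → Y → ℝ)
    (h0 : ∀ x y, 0 ≤ W x y) (h1 : ∀ x, ∑ y, W x y = 1) :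
    Ifun (Wminus W) (Wminus W) + Ifun (Wplus W) (Wplus W) = 2 * Ifun W W := by
  rw [hminus_eq, hplus_eq]
  trans (∑ y1 : Y, ∑ y2 : Y, ∑ u1 : Bool, ∑ u2 : Bool,
      ((1/2) * ((1/2) * W (u1 ^^ u2) y1 * W u2 y2) *
          Real.logb 2 (W (u1 ^^ u2) y1 / ((1/2) * W false y1 + (1/2) * W true y1)) +
       (1/2) * ((1/2) * W (u1 ^^ u2) y1 * W u2 y2) *
          Real.logb 2 (W u2 y2 / ((1/2) * W false y2 + (1/2) * W true y2))))
  · rw [← Finset.sum_add_distrib]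
    refine Finset.sum_congr rfl fun y1 _ => ?_
    rw [← Finset.sum_add_distrib]
    refine Finset.sum_congr rfl fun y2 _ => ?_
    rw [← Finset.sum_add_distrib]
    refine Finset.sum_congr rfl fun u1 _ => ?_
    rw [← Finset.sum_add_distrib]
    refine Finset.sum_congr rfl fun u2 _ => ?_
    linear_combination term_eq W h0 y1 y2 u1 u2
  · simp only [Finset.sum_add_distrib]
    rw [claimA W h1, claimB W h1]
    ring

end AuxFin

lemma conservation : ∀ (n : ℕ) {Y : Type*} [Fintype Y] (W : Bool → Y → ℝ),
    (∀ x y, 0 ≤ W x y) → (∀ x, ∑ y, W x y = 1) →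
    ∑ s : Fin n → Bool,
        Ifun (polarChan W (List.ofFn s)) (polarChan W (List.ofFn s)) =
      2^n * Ifun W W := by
  intro n
  induction n with
  | zero =>
    intro Y _ W _ _
    simp [polarChan]
    rw [List.ofFn_zero]; rfl
  | succ n ih =>
    intro Y _ W h0 h1
    rw [← Equiv.sum_comp (Fin.consEquiv (fun _ : Fin (n+1) => Bool))
        (fun s => Ifun (polarChan W (List.ofFn s)) (polarChan W (List.ofFn s))),
        Fintype.sum_prod_type, Fintype.sum_bool]
    have hcons : ∀ (b : Bool) (t : Fin n → Bool),
        List.ofFn ((Fin.consEquiv (fun _ : Fin (n+1) => Bool)) (b, t)) = b :: List.ofFn t := by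
      intro b t
      simp [Fin.consEquiv, List.ofFn_succ]
    have htrue : ∑ t : Fin n → Bool,
        Ifun (polarChan W (List.ofFn ((Fin.consEquiv (fun _ : Fin (n+1) => Bool)) (true, t))))
             (polarChan W (List.ofFn ((Fin.consEquiv (fun _ : Fin (n+1) => Bool)) (true, t))))
        = 2^n * Ifun (Wplus W) (Wplus W) := by
      refine (Finset.sum_congr rfl fun t _ => ?_).trans
        (ih (Wplus W) (Wplus_nonneg W h0) (Wplus_rowsum W h1))
      rw [hcons true t]; rfl
    have hfalse : ∑ t : Fin n → Bool,
        Ifun (polarChan W (List.ofFn ((Fin.consEquiv (fun _ : Fin (n+1) => Bool)) (false, t))))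
             (polarChan W (List.ofFn ((Fin.consEquiv (fun _ : Fin (n+1) => Bool)) (false, t))))
        = 2^n * Ifun (Wminus W) (Wminus W) := by
      refine (Finset.sum_congr rfl fun t _ => ?_).trans
        (ih (Wminus W) (Wminus_nonneg W h0) (Wminus_rowsum W h1))
      rw [hcons false t]; rfl
    rw [htrue, hfalse]
    linear_combination (2^n : ℝ) * one_step W h0 h1

/-- conservation of symmetric information under `n`-fold
polarization: `∑_{s ∈ {+,-}ⁿ} I(W^s) = 2ⁿ I(W)`. -/
theorem symmetric_info_n_step_conservation {Y : Type*} [Fintype Y]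
    (W : Bool → Y → ℝ)
    (hW0 : ∀ x y, 0 ≤ W x y) (hW1 : ∀ x, ∑ y, W x y = 1) (n : ℕ) :
    ∑ s : Fin n → Bool,
        Ifun (polarChan W (List.ofFn s)) (polarChan W (List.ofFn s)) =
      2^n * Ifun W W := by
  exact conservation n W hW0 hW1

end
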